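/- The functions N_k(w) = Π_{j=k}^N (1-w_j) satisfy the richness identity (λ_j - λ_k) ∂N_k/∂w_j = N_k ∂λ_k/∂w_j for all j, k ∈ {0,…,N}, where λ_k(w) are the eigenvalues of the discrete velocity traffic system in Riemann-invariant coordinates. -/

import Mathlib

open Finset

-- Fin interval facts
lemma fin_Ioi_castSucc {n : ℕ} (i : Fin n) :
    Finset.Ioi (i.castSucc) = Finset.Ici (i.succ) := by
  ext x; simp [Fin.castSucc_lt_iff_succ_le]

lemma fin_Ici_castSucc {n : ℕ} (i : Fin n) :
    Finset.Ici (i.castSucc) = insert (i.castSucc) (Finset.Ici (i.succ)) := by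
  ext x
  simp only [Finset.mem_Ici, Finset.mem_insert]
  rw [le_iff_lt_or_eq, Fin.castSucc_lt_iff_succ_le]
  tauto

lemma fin_castSucc_not_mem_Ici {n : ℕ} (i : Fin n) :
    i.castSucc ∉ Finset.Ici (i.succ) := by
  simp [Fin.lt_iff_le_and_ne, (Fin.castSucc_lt_succ (i := i)).not_ge]

lemma fin_Ico_castSucc {n : ℕ} (i : Fin n) (l : Fin (n+1)) (hl : i.succ ≤ l) :
    Finset.Ico (i.castSucc) l = insert (i.castSucc) (Finset.Ico (i.succ) l) := by
  ext x
  simp only [Finset.mem_Ico, Finset.mem_insert]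
  constructor
  · rintro ⟨h1, h2⟩
    rcases eq_or_lt_of_le h1 with h | h
    · exact Or.inl h.symm
    · exact Or.inr ⟨Fin.castSucc_lt_iff_succ_le.mp h, h2⟩
  · rintro (rfl | ⟨h1, h2⟩)
    · exact ⟨le_refl _, lt_of_lt_of_le (Fin.castSucc_lt_succ (i := i)) hl⟩
    · exact ⟨le_of_lt (lt_of_lt_of_le (Fin.castSucc_lt_succ (i := i)) h1), h2⟩

lemma fin_castSucc_not_mem_Ico {n : ℕ} (i : Fin n) (l : Fin (n+1)) :
    i.castSucc ∉ Finset.Ico (i.succ) l := by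
  simp only [Finset.mem_Ico, not_and]
  intro h
  exact absurd h (Fin.castSucc_lt_succ (i := i)).not_ge

lemma fin_Ici_last {n : ℕ} : Finset.Ici (Fin.last n) = {Fin.last n} := by
  ext x; simp [Fin.last_le_iff, eq_comm]

lemma fin_Ioi_last {n : ℕ} : Finset.Ioi (Fin.last n) = (∅ : Finset (Fin (n+1))) := by
  ext x; simp [Fin.le_last x]

-- telescoping
lemma tele {n : ℕ} (u : Fin (n+1) → ℝ) (m : Fin (n+1)) :
    ∑ l ∈ Finset.Ici m, u l * ∏ r ∈ Finset.Ico m l, (1 - u r)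
      = 1 - ∏ r ∈ Finset.Ici m, (1 - u r) := by
  induction m using Fin.reverseInduction with
  | last => simp [fin_Ici_last]
  | cast i ih =>
    rw [fin_Ici_castSucc, Finset.sum_insert (fin_castSucc_not_mem_Ici i),
      Finset.prod_insert (fin_castSucc_not_mem_Ici i), Finset.Ico_self, Finset.prod_empty]
    have hsum : ∑ l ∈ Finset.Ici i.succ, u l * ∏ r ∈ Finset.Ico i.castSucc l, (1 - u r)
        = (1 - u i.castSucc) * ∑ l ∈ Finset.Ici i.succ, u l * ∏ r ∈ Finset.Ico i.succ l, (1 - u r) := by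
      rw [Finset.mul_sum]
      refine Finset.sum_congr rfl fun l hl => ?_
      rw [fin_Ico_castSucc i l (Finset.mem_Ici.mp hl),
        Finset.prod_insert (fin_castSucc_not_mem_Ico i l)]
      ring
    rw [hsum, ih]
    ring
lemma rec_lam {n : ℕ} (v u : Fin (n+1) → ℝ) (hu : ∀ r, 1 - u r ≠ 0) (i : Fin n) :
    v i.castSucc - (∑ l ∈ Finset.Ioi i.castSucc, (v l - v i.castSucc) * u l *
        ∏ r ∈ Finset.Ico i.castSucc l, (1 - u r)) / ∏ l ∈ Finset.Ici i.castSucc, (1 - u l)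
    = (v i.succ - (∑ l ∈ Finset.Ioi i.succ, (v l - v i.succ) * u l *
        ∏ r ∈ Finset.Ico i.succ l, (1 - u r)) / ∏ l ∈ Finset.Ici i.succ, (1 - u l))
      - (v i.succ - v i.castSucc) / ∏ l ∈ Finset.Ici i.succ, (1 - u l) := by
  set k := i.castSucc
  set k1 := i.succ
  set P : ℝ := ∏ l ∈ Finset.Ici k1, (1 - u l) with hP
  set S1 : ℝ := ∑ l ∈ Finset.Ioi k1, (v l - v k1) * u l * ∏ r ∈ Finset.Ico k1 l, (1 - u r) with hS1
  have hPne : P ≠ 0 := Finset.prod_ne_zero_iff.mpr fun l _ => hu l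
  have hkne : (1 : ℝ) - u k ≠ 0 := hu k
  -- numerator
  have hnum : ∑ l ∈ Finset.Ioi k, (v l - v k) * u l * ∏ r ∈ Finset.Ico k l, (1 - u r)
      = (1 - u k) * (S1 + (v k1 - v k) * (1 - P)) := by
    rw [fin_Ioi_castSucc i]
    have step1 : ∑ l ∈ Finset.Ici k1, (v l - v k) * u l * ∏ r ∈ Finset.Ico k l, (1 - u r)
        = (1 - u k) * ∑ l ∈ Finset.Ici k1, (v l - v k) * u l * ∏ r ∈ Finset.Ico k1 l, (1 - u r) := by
      rw [Finset.mul_sum]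
      refine Finset.sum_congr rfl fun l hl => ?_
      rw [fin_Ico_castSucc i l (Finset.mem_Ici.mp hl),
        Finset.prod_insert (fin_castSucc_not_mem_Ico i l)]
      ring
    rw [step1]
    congr 1
    have split : ∑ l ∈ Finset.Ici k1, (v l - v k) * u l * ∏ r ∈ Finset.Ico k1 l, (1 - u r)
        = (∑ l ∈ Finset.Ici k1, (v l - v k1) * u l * ∏ r ∈ Finset.Ico k1 l, (1 - u r))
          + (v k1 - v k) * ∑ l ∈ Finset.Ici k1, u l * ∏ r ∈ Finset.Ico k1 l, (1 - u r) := by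
      rw [Finset.mul_sum, ← Finset.sum_add_distrib]
      refine Finset.sum_congr rfl fun l hl => ?_
      ring
    rw [split, tele u k1, ← hP]
    congr 1
    rw [Finset.Ici_eq_cons_Ioi, Finset.sum_cons]
    simp [hS1]
  have hden : ∏ l ∈ Finset.Ici k, (1 - u l) = (1 - u k) * P := by
    rw [fin_Ici_castSucc i, Finset.prod_insert (fin_castSucc_not_mem_Ici i), hP]
  rw [hnum, hden, mul_div_mul_left _ _ hkne]
  field_simp
  ring
lemma prodD {n : ℕ} (s : Finset (Fin n)) (x : Fin n → ℝ) :
    HasFDerivAt (fun u : Fin n → ℝ => ∏ l ∈ s, (1 - u l))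
      (∑ i ∈ s, (∏ l ∈ s.erase i, (1 - x l)) •
        (-(ContinuousLinearMap.proj i : (Fin n → ℝ) →L[ℝ] ℝ))) x := by
  have h : ∀ i ∈ s, HasFDerivAt (fun u : Fin n → ℝ => 1 - u i)
      (-(ContinuousLinearMap.proj i : (Fin n → ℝ) →L[ℝ] ℝ)) x := by
    intro i _
    exact ((ContinuousLinearMap.proj i : (Fin n → ℝ) →L[ℝ] ℝ).hasFDerivAt (x := x)).const_sub 1
  exact HasFDerivAt.finset_prod h

lemma evalD {n : ℕ} (s : Finset (Fin n)) (c : Fin n → ℝ) (j : Fin n) :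
    (∑ i ∈ s, c i • (-(ContinuousLinearMap.proj i : (Fin n → ℝ) →L[ℝ] ℝ)))
      (Pi.single j (1:ℝ)) = if j ∈ s then -(c j) else 0 := by
  rw [ContinuousLinearMap.sum_apply]
  have : ∀ i ∈ s, (c i • (-(ContinuousLinearMap.proj i : (Fin n → ℝ) →L[ℝ] ℝ)))
      (Pi.single j (1:ℝ)) = if i = j then -(c i) else 0 := by
    intro i _
    simp only [ContinuousLinearMap.smul_apply, ContinuousLinearMap.neg_apply,
      ContinuousLinearMap.proj_apply, Pi.single_apply]
    split <;> simp_all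
  rw [Finset.sum_congr rfl this]
  simp [Finset.sum_ite_eq]

/-- Richness identity: the functions `N_k(w) = Π_{j≥k}(1-w_j)` satisfy
`(λ_j - λ_k) ∂N_k/∂w_j = N_k ∂λ_k/∂w_j` for all `j, k`. -/
theorem stmt11 (N : ℕ) (hN : 1 ≤ N) (v : Fin (N+1) → ℝ)
    (hv : StrictMono v) (hv0 : v 0 = 0) (hvN : v (Fin.last N) = 1)
    (w : Fin (N+1) → ℝ) (hw : ∀ j, 0 < w j ∧ w j < 1)
    (lam : Fin (N+1) → (Fin (N+1) → ℝ) → ℝ)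
    (hlam : ∀ k u, lam k u =
      v k - (∑ l ∈ Finset.Ioi k, (v l - v k) * u l * ∏ r ∈ Finset.Ico k l, (1 - u r)) /
        ∏ l ∈ Finset.Ici k, (1 - u l))
    (Nf : Fin (N+1) → (Fin (N+1) → ℝ) → ℝ)
    (hNf : ∀ k u, Nf k u = ∏ l ∈ Finset.Ici k, (1 - u l)) :
    ∀ j k : Fin (N+1),
      (lam j w - lam k w) * fderiv ℝ (Nf k) w (Pi.single j 1)
        = Nf k w * fderiv ℝ (lam k) w (Pi.single j 1) := by
  have hw1 : ∀ r, 1 - w r ≠ 0 := fun r => by have := (hw r).2; intro h; linarith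
  -- derivative of Nf
  have hNfD : ∀ k : Fin (N+1), HasFDerivAt (Nf k)
      (∑ i ∈ Finset.Ici k, (∏ l ∈ (Finset.Ici k).erase i, (1 - w l)) •
        (-(ContinuousLinearMap.proj i : (Fin (N+1) → ℝ) →L[ℝ] ℝ))) w := by
    intro k
    have hfun : Nf k = fun u => ∏ l ∈ Finset.Ici k, (1 - u l) := funext (hNf k)
    rw [hfun]
    exact prodD _ _
  have hNfne : ∀ k : Fin (N+1), Nf k w ≠ 0 := by
    intro k
    rw [hNf]
    exact Finset.prod_ne_zero_iff.mpr fun l _ => hw1 l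
  have hev : ∀ᶠ u in nhds w, ∀ r, 1 - u r ≠ 0 := by
    rw [Filter.eventually_all]
    intro r
    exact ((continuous_const.sub (continuous_apply r)).continuousAt).eventually_ne (hw1 r)
  -- key induction for lam
  have key : ∀ k : Fin (N+1), ∃ G : (Fin (N+1) → ℝ) →L[ℝ] ℝ,
      HasFDerivAt (lam k) G w ∧ ∀ j, G (Pi.single j 1)
        = if k < j then (lam k w - lam j w) / (1 - w j) else 0 := by
    intro k
    induction k using Fin.reverseInduction with
    | last =>
      have hconst : lam (Fin.last N) = fun _ => v (Fin.last N) := by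
        funext u
        rw [hlam, fin_Ioi_last]
        simp
      refine ⟨0, ?_, ?_⟩
      · rw [hconst]; exact hasFDerivAt_const _ _
      · intro j
        rw [if_neg (not_lt.mpr (Fin.le_last j))]
        rfl
    | cast i ih =>
      obtain ⟨G1, hG1, hval1⟩ := ih
      set k := i.castSucc with hk
      set k1 := i.succ with hk1
      set c : ℝ := v k1 - v k with hc
      have hinv : HasFDerivAt (fun u => (Nf k1 u)⁻¹)
          ((-(Nf k1 w ^ 2)⁻¹) • (∑ i' ∈ Finset.Ici k1, (∏ l ∈ (Finset.Ici k1).erase i', (1 - w l)) •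
            (-(ContinuousLinearMap.proj i' : (Fin (N+1) → ℝ) →L[ℝ] ℝ)))) w :=
        (hasDerivAt_inv (hNfne k1)).comp_hasFDerivAt w (hNfD k1)
      have heq : lam k =ᶠ[nhds w] fun u => lam k1 u - c * (Nf k1 u)⁻¹ := by
        filter_upwards [hev] with u hu
        rw [hlam k u, hlam k1 u, hNf k1 u, rec_lam v u hu i]
        simp only [div_eq_mul_inv, hc, hk, hk1]
      have hder : HasFDerivAt (lam k)
          (G1 - c • ((-(Nf k1 w ^ 2)⁻¹) • (∑ i' ∈ Finset.Ici k1,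
            (∏ l ∈ (Finset.Ici k1).erase i', (1 - w l)) •
            (-(ContinuousLinearMap.proj i' : (Fin (N+1) → ℝ) →L[ℝ] ℝ))))) w :=
        (hG1.sub (hinv.const_mul c)).congr_of_eventuallyEq heq
      have hlamk : lam k w = lam k1 w - c * (Nf k1 w)⁻¹ := heq.eq_of_nhds
      refine ⟨_, hder, ?_⟩
      intro j
      rw [ContinuousLinearMap.sub_apply, ContinuousLinearMap.smul_apply,
        ContinuousLinearMap.smul_apply, evalD, hval1 j]
      by_cases hkj : k < j
      · have hk1j : k1 ≤ j := Fin.castSucc_lt_iff_succ_le.mp hkj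
        rw [if_pos hkj, if_pos (Finset.mem_Ici.mpr hk1j)]
        have hE : ∏ l ∈ (Finset.Ici k1).erase j, (1 - w l) ≠ 0 :=
          Finset.prod_ne_zero_iff.mpr fun l _ => hw1 l
        have hPfac : Nf k1 w = (1 - w j) * ∏ l ∈ (Finset.Ici k1).erase j, (1 - w l) := by
          rw [hNf, ← Finset.mul_prod_erase _ _ (Finset.mem_Ici.mpr hk1j)]
        rcases eq_or_lt_of_le hk1j with hjk1 | hjk1
        · subst hjk1
          rw [if_neg (lt_irrefl k1)]
          rw [hlamk, hPfac]
          have hE2 : ∏ x ∈ Finset.Ioi k1, (1 - w x) ≠ 0 :=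
            Finset.prod_ne_zero_iff.mpr fun l _ => hw1 l
          simp only [smul_eq_mul]
          field_simp [hE, hE2, hw1 k1]
          ring
        · rw [if_pos hjk1]
          rw [hlamk, hPfac]
          simp only [smul_eq_mul]
          field_simp [hE, hw1 j]
          ring
      · have hjk : j ≤ k := not_lt.mp hkj
        have h1 : ¬ k1 < j := fun h => hkj (lt_trans (Fin.castSucc_lt_succ (i := i)) h)
        have h2 : j ∉ Finset.Ici k1 := fun h =>
          absurd (le_trans (Finset.mem_Ici.mp h) hjk) (Fin.castSucc_lt_succ (i := i)).not_ge
        rw [if_neg hkj, if_neg h1, if_neg h2]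
        simp
  intro j k
  obtain ⟨G, hG, hval⟩ := key k
  rw [hG.fderiv, (hNfD k).fderiv, evalD, hval j]
  by_cases hkj : k < j
  · rw [if_pos hkj, if_pos (Finset.mem_Ici.mpr hkj.le)]
    have hE : ∏ l ∈ (Finset.Ici k).erase j, (1 - w l) ≠ 0 :=
      Finset.prod_ne_zero_iff.mpr fun l _ => hw1 l
    rw [hNf k w, ← Finset.mul_prod_erase _ _ (Finset.mem_Ici.mpr hkj.le)]
    field_simp [hE, hw1 j]
    ring
  · rw [if_neg hkj]
    rcases eq_or_lt_of_le (not_lt.mp hkj) with hjk | hjk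
    · rw [if_pos (Finset.mem_Ici.mpr (le_of_eq hjk.symm))]
      rw [← hjk, sub_self, zero_mul, mul_zero]
    · rw [if_neg (by intro h; exact absurd (Finset.mem_Ici.mp h) (not_le.mpr hjk))]
      rw [mul_zero, mul_zero]
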